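/- Characterization of local progress for semialgebraic sets (LP): Let f be a polynomial vector field on ℝⁿ. Let P ⊆ ℝⁿ be given in normal form: there are finitely many polynomials p_{ij} (0 ≤ i ≤ M, 0 ≤ j ≤ m(i)) and q_{ij} (0 ≤ i ≤ M, 0 ≤ j ≤ n(i)) such that P = { x ∈ ℝⁿ : there exists i ≤ M with p_{ij}(x) ≥ 0 for all j ≤ m(i) and q_{ij}(x) > 0 for all j ≤ n(i) }. Fix for each of these polynomials a rank with respect to f. Then for every ω ∈ ℝⁿ the following are equivalent: (a) there exist T > 0 and a solution φ : [0,T] → ℝⁿ of x' = f(x) with φ(0) = ω and φ(t) ∈ P for all t ∈ (0,T]; (b) there exists i ≤ M such that Prog≥_f(p_{ij})(ω) holds for all j ≤ m(i) and Prog>_f(q_{ij})(ω) holds for all j ≤ n(i). -/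

import Mathlib

open MvPolynomial Set

/-- Lie derivative of polynomial `p` along the polynomial vector field `f`. -/
noncomputable def lieD {n : ℕ} (f : Fin n → MvPolynomial (Fin n) ℝ)
    (p : MvPolynomial (Fin n) ℝ) : MvPolynomial (Fin n) ℝ :=
  ∑ i, pderiv i p * f i

/-- `φ` is a solution of `x' = f(x)` on `[0,T]`. -/
def IsSol {n : ℕ} (f : Fin n → MvPolynomial (Fin n) ℝ) (T : ℝ)
    (φ : ℝ → (Fin n → ℝ)) : Prop :=
  ∀ t ∈ Icc (0 : ℝ) T, HasDerivWithinAt φ (fun i => eval (φ t) (f i)) (Icc (0 : ℝ) T) t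


/-- `N` is a rank of `p` with respect to `f`. -/
def IsRank {n : ℕ} (f : Fin n → MvPolynomial (Fin n) ℝ)
    (p : MvPolynomial (Fin n) ℝ) (N : ℕ) : Prop :=
  1 ≤ N ∧ ∃ g : ℕ → MvPolynomial (Fin n) ℝ,
    (lieD f)^[N] p = ∑ i ∈ Finset.range N, g i * (lieD f)^[i] p

/-- Strict progress predicate: the first significant Lie derivative is positive. -/
def ProgGt {n : ℕ} (f : Fin n → MvPolynomial (Fin n) ℝ)
    (p : MvPolynomial (Fin n) ℝ) (N : ℕ) (ω : Fin n → ℝ) : Prop :=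
  ∃ k < N, (∀ j < k, eval ω ((lieD f)^[j] p) = 0) ∧ 0 < eval ω ((lieD f)^[k] p)

/-- Weak progress predicate. -/
def ProgGe {n : ℕ} (f : Fin n → MvPolynomial (Fin n) ℝ)
    (p : MvPolynomial (Fin n) ℝ) (N : ℕ) (ω : Fin n → ℝ) : Prop :=
  ProgGt f p N ω ∨ ∀ i < N, eval ω ((lieD f)^[i] p) = 0


lemma contDiff_eval_poly {n : ℕ} (r : MvPolynomial (Fin n) ℝ) :
    ContDiff ℝ ⊤ (fun x : Fin n → ℝ => eval x r) := by
  induction r using MvPolynomial.induction_on with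
  | C a => simpa using contDiff_const
  | add p q hp hq => simpa using hp.add hq
  | mul_X p i hp =>
      simpa using hp.mul ((ContinuousLinearMap.proj i :
        (Fin n → ℝ) →L[ℝ] ℝ).contDiff)

lemma hasDerivWithinAt_eval_comp {n : ℕ} {s : Set ℝ} {t : ℝ}
    {φ : ℝ → Fin n → ℝ} {φ' : Fin n → ℝ}
    (hφ : HasDerivWithinAt φ φ' s t) (r : MvPolynomial (Fin n) ℝ) :
    HasDerivWithinAt (fun u => eval (φ u) r)
      (∑ i, eval (φ t) (pderiv i r) * φ' i) s t := by
  induction r using MvPolynomial.induction_on with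
  | C a => simpa using hasDerivWithinAt_const t s ((C a : MvPolynomial (Fin n) ℝ).eval (φ t))
  | add p q hp hq =>
      have := hp.add hq
      simp only [map_add] at this ⊢
      refine this.congr_deriv ?_
      rw [← Finset.sum_add_distrib]
      congr 1; ext i; ring
  | mul_X p i hp =>
      have hproj : HasDerivWithinAt (fun u => φ u i) (φ' i) s t :=
        (ContinuousLinearMap.proj i :
          (Fin n → ℝ) →L[ℝ] ℝ).hasFDerivAt.comp_hasDerivWithinAt t hφ
      have := hp.mul hproj
      simp only [map_mul, eval_X] at this ⊢
      refine this.congr_deriv ?_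
      simp only [pderiv_mul, pderiv_X, map_add, map_mul, eval_X, Pi.single_apply,
        apply_ite (eval (φ t)), map_one, map_zero, mul_ite, mul_one, mul_zero, ite_mul,
        zero_mul, add_mul, Finset.sum_add_distrib, Finset.sum_ite_eq, Finset.mem_univ,
        if_true, Finset.sum_mul]
      congr 1
      exact Finset.sum_congr rfl fun x _ => by ring

lemma sol_deriv {n : ℕ} {f : Fin n → MvPolynomial (Fin n) ℝ} {T : ℝ}
    {φ : ℝ → Fin n → ℝ} (hφ : IsSol f T φ) (r : MvPolynomial (Fin n) ℝ)
    {t : ℝ} (ht : t ∈ Icc (0 : ℝ) T) :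
    HasDerivWithinAt (fun u => eval (φ u) r) (eval (φ t) (lieD f r)) (Icc (0 : ℝ) T) t := by
  have := hasDerivWithinAt_eval_comp (hφ t ht) r
  simpa [lieD, map_sum] using this

lemma sol_deriv_iter {n : ℕ} {f : Fin n → MvPolynomial (Fin n) ℝ} {T : ℝ}
    {φ : ℝ → Fin n → ℝ} (hφ : IsSol f T φ) (r : MvPolynomial (Fin n) ℝ) (j : ℕ)
    {t : ℝ} (ht : t ∈ Icc (0 : ℝ) T) :
    HasDerivWithinAt (fun u => eval (φ u) ((lieD f)^[j] r))
      (eval (φ t) ((lieD f)^[j+1] r)) (Icc (0 : ℝ) T) t := by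
  simpa [Function.iterate_succ_apply'] using sol_deriv hφ ((lieD f)^[j] r) ht

/-- If the first `k` derivatives vanish at 0 and the `k`-th is positive, then positive nearby. -/
lemma sign_pos_lemma : ∀ (k : ℕ) (Y : ℕ → ℝ → ℝ) (T : ℝ), 0 < T →
    (∀ j, ∀ t ∈ Icc (0:ℝ) T, HasDerivWithinAt (Y j) (Y (j+1) t) (Icc (0:ℝ) T) t) →
    (∀ j < k, Y j 0 = 0) → 0 < Y k 0 →
    ∃ δ, 0 < δ ∧ δ ≤ T ∧ ∀ t ∈ Ioc (0:ℝ) δ, 0 < Y 0 t := by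
  intro k
  induction k with
  | zero =>
    intro Y T hT hd _ hk
    have hcont : ContinuousWithinAt (Y 0) (Icc 0 T) 0 :=
      (hd 0 0 ⟨le_refl _, hT.le⟩).continuousWithinAt
    have hev : ∀ᶠ u in nhdsWithin 0 (Icc 0 T), 0 < Y 0 u :=
      hcont (IsOpen.mem_nhds isOpen_Ioi hk)
    rw [eventually_nhdsWithin_iff, Metric.eventually_nhds_iff] at hev
    obtain ⟨ε, hε, h⟩ := hev
    refine ⟨min (ε/2) T, lt_min (half_pos hε) hT, min_le_right _ _, fun t ht => ?_⟩
    have h1 : dist t 0 < ε := by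
      rw [Real.dist_eq, sub_zero, abs_of_pos ht.1]
      exact lt_of_le_of_lt (ht.2.trans (min_le_left _ _)) (by linarith)
    exact h h1 ⟨ht.1.le, ht.2.trans (min_le_right _ _)⟩
  | succ k ih =>
    intro Y T hT hd h0 hk
    obtain ⟨δ, hδ0, hδT, hpos⟩ := ih (fun j => Y (j+1)) T hT (fun j => hd (j+1))
      (fun j hj => h0 (j+1) (by omega)) hk
    have hmono : StrictMonoOn (Y 0) (Icc 0 δ) := by
      apply strictMonoOn_of_deriv_pos (convex_Icc 0 δ)
      · exact fun t ht => ((hd 0 t ⟨ht.1, ht.2.trans hδT⟩).continuousWithinAt).mono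
          (Icc_subset_Icc le_rfl hδT)
      · intro x hx
        rw [interior_Icc] at hx
        have hx' : x ∈ Icc (0:ℝ) T := ⟨hx.1.le, (hx.2.trans_le hδT).le⟩
        have hda : HasDerivAt (Y 0) (Y 1 x) x :=
          (hd 0 x hx').hasDerivAt (Icc_mem_nhds hx.1 (hx.2.trans_le hδT))
        rw [hda.deriv]
        exact hpos x ⟨hx.1, hx.2.le⟩
    refine ⟨δ, hδ0, hδT, fun t ht => ?_⟩
    have := hmono ⟨le_refl _, hδ0.le⟩ ⟨ht.1.le, ht.2⟩ ht.1
    rwa [h0 0 (Nat.succ_pos k)] at this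

lemma sign_neg_lemma (k : ℕ) (Y : ℕ → ℝ → ℝ) (T : ℝ) (hT : 0 < T)
    (hd : ∀ j, ∀ t ∈ Icc (0:ℝ) T, HasDerivWithinAt (Y j) (Y (j+1) t) (Icc (0:ℝ) T) t)
    (h0 : ∀ j < k, Y j 0 = 0) (hk : Y k 0 < 0) :
    ∃ δ, 0 < δ ∧ δ ≤ T ∧ ∀ t ∈ Ioc (0:ℝ) δ, Y 0 t < 0 := by
  obtain ⟨δ, h1, h2, h3⟩ := sign_pos_lemma k (fun j t => -(Y j t)) T hT
    (fun j t ht => (hd j t ht).neg) (fun j hj => by simp [h0 j hj]) (by simpa using hk)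
  exact ⟨δ, h1, h2, fun t ht => by simpa using h3 t ht⟩


lemma vanish_lemma {n : ℕ} {f : Fin n → MvPolynomial (Fin n) ℝ}
    {p : MvPolynomial (Fin n) ℝ} {N : ℕ} (hr : IsRank f p N)
    {T : ℝ} (hT : 0 < T) {φ : ℝ → Fin n → ℝ} (hφ : IsSol f T φ)
    (h0 : ∀ i < N, eval (φ 0) ((lieD f)^[i] p) = 0) :
    ∀ t ∈ Icc (0:ℝ) T, ∀ i < N, eval (φ t) ((lieD f)^[i] p) = 0 := by
  obtain ⟨hN, g, hg⟩ := hr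
  -- continuity of φ on the interval
  have hcont : ContinuousOn φ (Icc 0 T) := fun t ht => (hφ t ht).continuousWithinAt
  have hKcomp : IsCompact (φ '' Icc 0 T) := (isCompact_Icc).image_of_continuousOn hcont
  -- bound on the coefficients
  have hcg : ContinuousOn (fun x : Fin n → ℝ => ∑ i ∈ Finset.range N, |eval x (g i)|)
      (φ '' Icc 0 T) := by
    exact (continuous_finset_sum _ fun i _ =>
      (MvPolynomial.continuous_eval (g i)).abs).continuousOn
  obtain ⟨c, hc⟩ := hKcomp.exists_bound_of_continuousOn hcg
  have hcbound : ∀ x ∈ φ '' Icc 0 T, ∀ i < N, |eval x (g i)| ≤ c := by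
    intro x hx i hi
    refine le_trans ?_ (le_trans (le_abs_self _) (hc x hx))
    exact Finset.single_le_sum (f := fun i => |eval x (g i)|)
      (fun j _ => abs_nonneg _) (Finset.mem_range.mpr hi)
  have hc0 : 0 ≤ c := le_trans (abs_nonneg _)
    (hcbound (φ 0) ⟨0, ⟨le_refl _, hT.le⟩, rfl⟩ 0 hN)
  -- clamped coefficients
  set a : ℝ → Fin N → ℝ := fun t i => eval (φ (max 0 (min t T))) (g (i : ℕ)) with ha
  have haeq : ∀ t ∈ Icc (0:ℝ) T, ∀ i : Fin N, a t i = eval (φ t) (g (i:ℕ)) := by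
    intro t ht i
    simp only [ha]
    rw [min_eq_left ht.2, max_eq_right ht.1]
  have habd : ∀ (t : ℝ) (i : Fin N), |a t i| ≤ c := by
    intro t i
    refine hcbound _ ⟨max 0 (min t T), ?_, rfl⟩ i i.2
    constructor
    · exact le_max_left _ _
    · exact max_le hT.le (min_le_right _ _)
  -- the linear vector field
  set V : ℝ → (Fin N → ℝ) → (Fin N → ℝ) := fun t x j =>
    if h : (j : ℕ) + 1 < N then x ⟨(j:ℕ)+1, h⟩ else ∑ i, a t i * x i with hV
  have hVlin : ∀ t x y, V t x - V t y = V t (x - y) := by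
    intro t x y
    funext j
    by_cases h : (j : ℕ) + 1 < N <;> simp [hV, h, ← Finset.sum_sub_distrib, mul_sub]
  set κ : NNReal := Real.toNNReal (max 1 (N * c)) with hκ
  have hκcoe : (κ : ℝ) = max 1 (N * c) := Real.coe_toNNReal _ (le_trans zero_le_one (le_max_left _ _))
  have hVlip : ∀ t, LipschitzWith κ (V t) := by
    intro t
    rw [lipschitzWith_iff_dist_le_mul]
    intro x y
    have hr0 : (0:ℝ) ≤ (κ : ℝ) * dist x y := mul_nonneg κ.2 dist_nonneg
    rw [dist_pi_le_iff hr0]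
    intro j
    rw [Real.dist_eq]
    by_cases h : (j : ℕ) + 1 < N
    · simp only [hV, dif_pos h]
      rw [← Real.dist_eq]
      refine le_trans (dist_le_pi_dist x y _) ?_
      rw [hκcoe]
      nlinarith [dist_nonneg (x := x) (y := y), le_max_left 1 ((N:ℝ) * c)]
    · simp only [hV, dif_neg h]
      rw [← Finset.sum_sub_distrib]
      refine le_trans (Finset.abs_sum_le_sum_abs _ _) ?_
      have : ∀ i : Fin N, |a t i * x i - a t i * y i| ≤ c * dist x y := by
        intro i
        rw [← mul_sub, abs_mul]
        refine mul_le_mul (habd t i) ?_ (abs_nonneg _) hc0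
        rw [← Real.dist_eq]; exact dist_le_pi_dist x y i
      refine le_trans (Finset.sum_le_sum (fun i _ => this i)) ?_
      simp only [Finset.sum_const, Finset.card_univ, Fintype.card_fin, nsmul_eq_mul]
      rw [hκcoe]
      nlinarith [dist_nonneg (x := x) (y := y), le_max_right 1 ((N:ℝ) * c)]
  -- the solution vector
  set u : ℝ → Fin N → ℝ := fun t j => eval (φ t) ((lieD f)^[(j:ℕ)] p) with hu
  have hucont : ContinuousOn u (Icc 0 T) := by
    have : Continuous (fun x : Fin n → ℝ => (fun j : Fin N => eval x ((lieD f)^[(j:ℕ)] p))) := by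
      apply continuous_pi_iff.mpr
      intro j
      exact MvPolynomial.continuous_eval _
    exact this.comp_continuousOn hcont
  have hu' : ∀ t ∈ Ico (0:ℝ) T, HasDerivWithinAt u (V t (u t)) (Ici t) t := by
    intro t ht
    have htI : t ∈ Icc (0:ℝ) T := ⟨ht.1, ht.2.le⟩
    have h1 : HasDerivWithinAt u (fun j : Fin N => eval (φ t) ((lieD f)^[(j:ℕ)+1] p))
        (Icc 0 T) t := by
      apply hasDerivWithinAt_pi.mpr
      intro j
      exact sol_deriv_iter hφ p (j : ℕ) htI
    have h2 : V t (u t) = fun j : Fin N => eval (φ t) ((lieD f)^[(j:ℕ)+1] p) := by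
      funext j
      by_cases h : (j : ℕ) + 1 < N
      · simp [hV, h, hu]
      · have hj : (j : ℕ) + 1 = N := by omega
        simp only [hV, dif_neg h, hu]
        rw [hj, hg, map_sum]
        rw [← Fin.sum_univ_eq_sum_range (fun i => eval (φ t) (g i * (lieD f)^[i] p)) N]
        refine Finset.sum_congr rfl fun i _ => ?_
        rw [map_mul, haeq t htI i]
    have hmem : Icc (0:ℝ) T ∈ nhdsWithin t (Ici t) := by
      have h4 : Ico t T ∈ nhdsWithin t (Ici t) := by
        rw [mem_nhdsWithin_iff_exists_mem_nhds_inter]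
        exact ⟨Iio T, Iio_mem_nhds ht.2, fun x hx => ⟨hx.2, hx.1⟩⟩
      exact Filter.mem_of_superset h4 (fun s hs => ⟨ht.1.trans hs.1, hs.2.le⟩)
    have h3 := h1.mono_of_mem_nhdsWithin hmem
    rw [← h2] at h3
    exact h3
  have hzero' : ∀ t ∈ Ico (0:ℝ) T, HasDerivWithinAt (fun _ : ℝ => (0 : Fin N → ℝ))
      (V t 0) (Ici t) t := by
    intro t ht
    have : V t 0 = 0 := by
      funext j
      by_cases h : (j : ℕ) + 1 < N <;> simp [hV, h]
    rw [this]
    exact hasDerivWithinAt_const t _ 0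
  have hu0 : u 0 = 0 := by
    funext j
    exact h0 (j : ℕ) j.2
  have := ODE_solution_unique hVlip hucont hu' (continuousOn_const) hzero' hu0
  intro t ht i hi
  have := congrFun (this ht) ⟨i, hi⟩
  simpa [hu] using this

/-- Characterization of local progress for semialgebraic sets (LP). -/
theorem LP_char {n : ℕ} (hn : 1 ≤ n) (f : Fin n → MvPolynomial (Fin n) ℝ)
    (M : ℕ) (m k : ℕ → ℕ)
    (p q : ℕ → ℕ → MvPolynomial (Fin n) ℝ) (Np Nq : ℕ → ℕ → ℕ)
    (hNp : ∀ i ≤ M, ∀ j ≤ m i, IsRank f (p i j) (Np i j))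
    (hNq : ∀ i ≤ M, ∀ j ≤ k i, IsRank f (q i j) (Nq i j))
    (P : Set (Fin n → ℝ))
    (hP : P = {x | ∃ i ≤ M, (∀ j ≤ m i, 0 ≤ eval x (p i j)) ∧
        (∀ j ≤ k i, 0 < eval x (q i j))})
    (ω : Fin n → ℝ) :
    (∃ T : ℝ, 0 < T ∧ ∃ φ : ℝ → (Fin n → ℝ), IsSol f T φ ∧ φ 0 = ω ∧
        ∀ t ∈ Ioc (0 : ℝ) T, φ t ∈ P)
    ↔ (∃ i ≤ M, (∀ j ≤ m i, ProgGe f (p i j) (Np i j) ω) ∧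
        (∀ j ≤ k i, ProgGt f (q i j) (Nq i j) ω)) := by

  constructor
  · rintro ⟨T, hT, φ, hφ, hφ0, hmem⟩
    classical
    subst hP
    set S : ℕ → Set ℝ := fun i => {t | t ∈ Ioc (0:ℝ) T ∧
      (∀ j ≤ m i, 0 ≤ eval (φ t) (p i j)) ∧ (∀ j ≤ k i, 0 < eval (φ t) (q i j))} with hS
    have hcover : Ioc (0:ℝ) T ⊆ ⋃ i ∈ Finset.range (M+1), S i := by
      intro t ht
      obtain ⟨i, hiM, h1, h2⟩ := hmem t ht
      exact Set.mem_biUnion (Finset.mem_range.mpr (Nat.lt_succ_of_le hiM)) ⟨ht, h1, h2⟩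
    have h0cl : (0:ℝ) ∈ closure (⋃ i ∈ Finset.range (M+1), S i) := by
      have h1 : (0:ℝ) ∈ closure (Ioc (0:ℝ) T) := by
        rw [closure_Ioc hT.ne]
        exact ⟨le_refl _, hT.le⟩
      exact closure_mono hcover h1
    rw [Finset.closure_biUnion] at h0cl
    obtain ⟨i, hi, h0Si⟩ : ∃ i ≤ M, (0:ℝ) ∈ closure (S i) := by
      simp only [Set.mem_iUnion] at h0cl
      obtain ⟨i, hi, h⟩ := h0cl
      exact ⟨i, Nat.lt_succ_iff.mp (Finset.mem_range.mp hi), h⟩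
    have key : ∀ δ > 0, ∃ t ∈ S i, t ≤ δ := by
      intro δ hδ
      rw [Metric.mem_closure_iff] at h0Si
      obtain ⟨t, htS, hdist⟩ := h0Si δ hδ
      refine ⟨t, htS, ?_⟩
      rw [Real.dist_eq, abs_sub_comm, sub_zero, abs_of_pos htS.1.1] at hdist
      exact hdist.le
    refine ⟨i, hi, ?_, ?_⟩
    · intro j hj
      by_cases hall : ∀ l < Np i j, eval ω ((lieD f)^[l] (p i j)) = 0
      · exact Or.inr hall
      · push_neg at hall
        obtain ⟨l, hlN, hlne⟩ := hall
        have hex : ∃ l, eval ω ((lieD f)^[l] (p i j)) ≠ 0 := ⟨l, hlne⟩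
        have hk₀N : Nat.find hex < Np i j := lt_of_le_of_lt (Nat.find_le hlne) hlN
        have hmin : ∀ j' < Nat.find hex, eval ω ((lieD f)^[j'] (p i j)) = 0 :=
          fun j' hj' => not_not.mp (Nat.find_min hex hj')
        rcases lt_trichotomy (eval ω ((lieD f)^[Nat.find hex] (p i j))) 0 with hneg | hzero | hpos
        · exfalso
          obtain ⟨δ, hδ0, hδT, hneg'⟩ := sign_neg_lemma (Nat.find hex)
            (fun l t => eval (φ t) ((lieD f)^[l] (p i j))) T hT
            (fun l t ht => sol_deriv_iter hφ (p i j) l ht)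
            (fun j' hj' => by simp only [hφ0]; exact hmin j' hj') (by simp only [hφ0]; exact hneg)
          obtain ⟨t, htS, htδ⟩ := key δ hδ0
          have h1 := htS.2.1 j hj
          have h2 := hneg' t ⟨htS.1.1, htδ⟩
          simp only [Function.iterate_zero_apply] at h2
          linarith
        · exact absurd hzero (by simpa using Nat.find_spec hex)
        · exact Or.inl ⟨Nat.find hex, hk₀N, hmin, hpos⟩
    · intro j hj
      by_cases hall : ∀ l < Nq i j, eval ω ((lieD f)^[l] (q i j)) = 0
      · exfalso
        have hvan := vanish_lemma (hNq i hi j hj) hT hφ (by simp only [hφ0]; exact hall)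
        obtain ⟨t, htS, htδ⟩ := key T hT
        have h1 := htS.2.2 j hj
        have h2 := hvan t ⟨htS.1.1.le, htS.1.2⟩ 0 (hNq i hi j hj).1
        simp only [Function.iterate_zero_apply] at h2
        linarith
      · push_neg at hall
        obtain ⟨l, hlN, hlne⟩ := hall
        have hex : ∃ l, eval ω ((lieD f)^[l] (q i j)) ≠ 0 := ⟨l, hlne⟩
        have hk₀N : Nat.find hex < Nq i j := lt_of_le_of_lt (Nat.find_le hlne) hlN
        have hmin : ∀ j' < Nat.find hex, eval ω ((lieD f)^[j'] (q i j)) = 0 :=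
          fun j' hj' => not_not.mp (Nat.find_min hex hj')
        rcases lt_trichotomy (eval ω ((lieD f)^[Nat.find hex] (q i j))) 0 with hneg | hzero | hpos
        · exfalso
          obtain ⟨δ, hδ0, hδT, hneg'⟩ := sign_neg_lemma (Nat.find hex)
            (fun l t => eval (φ t) ((lieD f)^[l] (q i j))) T hT
            (fun l t ht => sol_deriv_iter hφ (q i j) l ht)
            (fun j' hj' => by simp only [hφ0]; exact hmin j' hj') (by simp only [hφ0]; exact hneg)
          obtain ⟨t, htS, htδ⟩ := key δ hδ0
          have h1 := htS.2.2 j hj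
          have h2 := hneg' t ⟨htS.1.1, htδ⟩
          simp only [Function.iterate_zero_apply] at h2
          linarith
        · exact absurd hzero (by simpa using Nat.find_spec hex)
        · exact ⟨Nat.find hex, hk₀N, hmin, hpos⟩
  · rintro ⟨i, hi, hps, hqs⟩
    classical
    have hF : ContDiff ℝ 1 (fun x : Fin n → ℝ => fun j => eval x (f j)) := by
      apply contDiff_pi.mpr
      intro j
      exact (contDiff_eval_poly (f j)).of_le le_top
    obtain ⟨φ, hφ0, ε, hε, hder⟩ :=
      (hF.contDiffAt (x := ω)).exists_forall_mem_closedBall_exists_eq_forall_mem_Ioo_hasDerivAt₀ (0:ℝ)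
    have hT₀pos : 0 < ε/2 := by positivity
    have hsol : IsSol f (ε/2) φ := by
      intro t ht
      have h1 : t ∈ Ioo (0 - ε) (0 + ε) := ⟨by linarith [ht.1], by linarith [ht.2]⟩
      exact (hder t h1).hasDerivWithinAt
    have Hp : ∀ j : ℕ, ∃ δ, 0 < δ ∧ δ ≤ ε/2 ∧
        (j ≤ m i → ∀ t ∈ Ioc (0:ℝ) δ, 0 ≤ eval (φ t) (p i j)) := by
      intro j
      by_cases hj : j ≤ m i
      · rcases hps j hj with ⟨k₀, hk₀, hzero, hpos⟩ | hall
        · obtain ⟨δ, h1, h2, h3⟩ := sign_pos_lemma k₀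
            (fun l t => eval (φ t) ((lieD f)^[l] (p i j))) (ε/2) hT₀pos
            (fun l t ht => sol_deriv_iter hsol (p i j) l ht)
            (fun j' hj' => by simp only [hφ0]; exact hzero j' hj') (by simp only [hφ0]; exact hpos)
          refine ⟨δ, h1, h2, fun _ t ht => ?_⟩
          have := (h3 t ht).le
          simpa using this
        · have hvan := vanish_lemma (hNp i hi j hj) hT₀pos hsol (by simp only [hφ0]; exact hall)
          refine ⟨ε/2, hT₀pos, le_refl _, fun _ t ht => ?_⟩
          have := hvan t ⟨ht.1.le, ht.2⟩ 0 (hNp i hi j hj).1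
          simp only [Function.iterate_zero_apply] at this
          exact this.ge
      · exact ⟨ε/2, hT₀pos, le_refl _, fun h => absurd h hj⟩
    have Hq : ∀ j : ℕ, ∃ δ, 0 < δ ∧ δ ≤ ε/2 ∧
        (j ≤ k i → ∀ t ∈ Ioc (0:ℝ) δ, 0 < eval (φ t) (q i j)) := by
      intro j
      by_cases hj : j ≤ k i
      · obtain ⟨k₀, hk₀, hzero, hpos⟩ := hqs j hj
        obtain ⟨δ, h1, h2, h3⟩ := sign_pos_lemma k₀
          (fun l t => eval (φ t) ((lieD f)^[l] (q i j))) (ε/2) hT₀pos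
          (fun l t ht => sol_deriv_iter hsol (q i j) l ht)
          (fun j' hj' => by simp only [hφ0]; exact hzero j' hj') (by simp only [hφ0]; exact hpos)
        refine ⟨δ, h1, h2, fun _ t ht => ?_⟩
        have := h3 t ht
        simpa using this
      · exact ⟨ε/2, hT₀pos, le_refl _, fun h => absurd h hj⟩
    choose δp hδp0 hδpT hδpP using Hp
    choose δq hδq0 hδqT hδqP using Hq
    have hne1 : (Finset.range (m i + 1)).Nonempty := ⟨0, Finset.mem_range.mpr (Nat.succ_pos _)⟩
    have hne2 : (Finset.range (k i + 1)).Nonempty := ⟨0, Finset.mem_range.mpr (Nat.succ_pos _)⟩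
    set δ := min ((Finset.range (m i + 1)).inf' hne1 δp)
      ((Finset.range (k i + 1)).inf' hne2 δq) with hδ
    have hδ0 : 0 < δ :=
      lt_min ((Finset.lt_inf'_iff hne1).mpr fun j _ => hδp0 j)
        ((Finset.lt_inf'_iff hne2).mpr fun j _ => hδq0 j)
    have hδT : δ ≤ ε/2 :=
      le_trans (min_le_left _ _)
        (le_trans (Finset.inf'_le _ (Finset.mem_range.mpr (Nat.succ_pos _))) (hδpT 0))
    refine ⟨δ, hδ0, φ, ?_, hφ0, ?_⟩
    · intro t ht
      exact ((hsol t ⟨ht.1, ht.2.trans hδT⟩).mono (Icc_subset_Icc le_rfl hδT))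
    · intro t ht
      rw [hP]
      refine ⟨i, hi, fun j hj => ?_, fun j hj => ?_⟩
      · refine hδpP j hj t ⟨ht.1, le_trans ht.2 ?_⟩
        exact le_trans (min_le_left _ _)
          (Finset.inf'_le _ (Finset.mem_range.mpr (Nat.lt_succ_of_le hj)))
      · refine hδqP j hj t ⟨ht.1, le_trans ht.2 ?_⟩
        exact le_trans (min_le_right _ _)
          (Finset.inf'_le _ (Finset.mem_range.mpr (Nat.lt_succ_of_le hj)))
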